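/- Let F be a nonempty antichain of subsets of a set V, each member of F being a proper subset of some member of an antichain H on V. Define H' = (H \ ⟨F⟩) ∪ F, where ⟨F⟩ is the up-closure of F. Then H' is an antichain, F ∩ ⟨H⟩ = ∅, and ⟨H⟩ ⊊ ⟨H'⟩. -/
import Mathlib


/-- Invariants of the container algorithm update (Lemma 4.1): if F is a nonempty
antichain each of whose members is a proper subset of some edge of the antichain H,
then H' = (H \ ⟨F⟩) ∪ F is an antichain, F ∩ ⟨H⟩ = ∅, and ⟨H⟩ ⊊ ⟨H'⟩. -/
theorem stmt_17 {V : Type*} [Fintype V] [DecidableEq V]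
    (H F : Finset (Finset V)) (hne : F.Nonempty)
    (hH : IsAntichain (· ⊆ ·) (H : Set (Finset V)))
    (hF : IsAntichain (· ⊆ ·) (F : Set (Finset V)))
    (hsub : ∀ A ∈ F, ∃ E ∈ H, A ⊂ E) :
    IsAntichain (· ⊆ ·)
        (((H \ H.filter (fun E => ∃ A ∈ F, A ⊆ E)) ∪ F : Finset (Finset V)) :
          Set (Finset V)) ∧
    (∀ A ∈ F, ¬ ∃ E ∈ H, E ⊆ A) ∧
    {S : Finset V | ∃ E ∈ H, E ⊆ S} ⊂
      {S : Finset V | ∃ E ∈ (H \ H.filter (fun E => ∃ A ∈ F, A ⊆ E)) ∪ F, E ⊆ S} := by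
  have key : ∀ A ∈ F, ¬ ∃ E ∈ H, E ⊆ A := by
    intro A hA ⟨E, hE, hEA⟩
    obtain ⟨E', hE', hAE'⟩ := hsub A hA
    have hEE' : E ⊆ E' := hEA.trans hAE'.subset
    have hne' : E ≠ E' := by
      rintro rfl
      exact absurd hEA (not_subset_of_ssubset hAE')
    exact hH hE hE' hne' hEE'
  refine ⟨?_, key, ?_⟩
  · intro X hX Y hY hXY hle
    simp only [Finset.coe_union, Set.mem_union, Finset.coe_sdiff, Set.mem_diff,
      Finset.mem_coe, Finset.mem_filter] at hX hY
    rcases hX with ⟨hXH, hXf⟩ | hXF <;> rcases hY with ⟨hYH, hYf⟩ | hYF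
    · exact hH hXH hYH hXY hle
    · exact key Y hYF ⟨X, hXH, hle⟩
    · exact hYf ⟨hYH, X, hXF, hle⟩
    · exact hF hXF hYF hXY hle
  · constructor
    · rintro S ⟨E, hE, hES⟩
      by_cases h : ∃ A ∈ F, A ⊆ E
      · obtain ⟨A, hA, hAE⟩ := h
        exact ⟨A, Finset.mem_union_right _ hA, hAE.trans hES⟩
      · exact ⟨E, Finset.mem_union_left _ (Finset.mem_sdiff.2
          ⟨hE, fun hc => h (Finset.mem_filter.1 hc).2⟩), hES⟩
    · intro hcon
      obtain ⟨A, hA⟩ := hne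
      have : A ∈ {S : Finset V | ∃ E ∈ H, E ⊆ S} :=
        hcon ⟨A, Finset.mem_union_right _ hA, le_refl _⟩
      exact key A hA this
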